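/- Let y : (0,a) → ℝ satisfy the Calabi ODE for n = 2, with y' > 0, y → +∞, y' → +∞, e^{y}/y'³ → 1/(3a) and (y'³ − 3re^{y})/y'² → −3/(2a) as r → a⁻. Define C(r) = −4re^{y}/y' + 24r²e^{2y}/y'⁴ − 36r³e^{3y}/y'⁷ + 36re^{2y}/y'⁵ − 12e^{y}/y'². Then C(r) → 3/a² as r → a⁻. -/
import Mathlib


open Real Set Filter Topology

theorem calabi_C_limit
    (a : ℝ) (ha : 0 < a) (y y' y'' : ℝ → ℝ)
    (hy' : ∀ r ∈ Ioo (0:ℝ) a, HasDerivAt y (y' r) r)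
    (hy'' : ∀ r ∈ Ioo (0:ℝ) a, HasDerivAt y' (y'' r) r)
    (hy'pos : ∀ r ∈ Ioo (0:ℝ) a, 0 < y' r)
    (hode : ∀ r ∈ Ioo (0:ℝ) a, y'' r = r * Real.exp (y r) / y' r)
    (hy_top : Tendsto y (𝓝[<] a) atTop)
    (hy'_top : Tendsto y' (𝓝[<] a) atTop)
    (hlim : Tendsto (fun r => Real.exp (y r) / (y' r) ^ 3) (𝓝[<] a) (𝓝 (1 / (3 * a))))
    (hlim2 : Tendsto (fun r => ((y' r) ^ 3 - 3 * r * Real.exp (y r)) / (y' r) ^ 2)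
      (𝓝[<] a) (𝓝 (-3 / (2 * a)))) :
    Tendsto (fun r =>
        -4 * r * Real.exp (y r) / y' r
        + 24 * r ^ 2 * Real.exp (2 * y r) / (y' r) ^ 4
        - 36 * r ^ 3 * Real.exp (3 * y r) / (y' r) ^ 7
        + 36 * r * Real.exp (2 * y r) / (y' r) ^ 5
        - 12 * Real.exp (y r) / (y' r) ^ 2)
      (𝓝[<] a) (𝓝 (3 / a ^ 2)) := by
  have hid : Tendsto (fun r : ℝ => r) (𝓝[<] a) (𝓝 a) :=
    tendsto_id.mono_right nhdsWithin_le_nhds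
  have key : Tendsto (fun r =>
      -4 * r * (Real.exp (y r) / (y' r) ^ 3) *
        (((y' r) ^ 3 - 3 * r * Real.exp (y r)) / (y' r) ^ 2) ^ 2
      - 12 * (Real.exp (y r) / (y' r) ^ 3) *
        (((y' r) ^ 3 - 3 * r * Real.exp (y r)) / (y' r) ^ 2))
      (𝓝[<] a) (𝓝 (-4 * a * (1 / (3 * a)) * (-3 / (2 * a)) ^ 2
        - 12 * (1 / (3 * a)) * (-3 / (2 * a)))) := by
    exact (((((tendsto_const_nhds.mul hid).mul hlim).mul (hlim2.pow 2))).sub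
      ((tendsto_const_nhds.mul hlim).mul hlim2))
  have hval : (-4 * a * (1 / (3 * a)) * (-3 / (2 * a)) ^ 2
      - 12 * (1 / (3 * a)) * (-3 / (2 * a))) = 3 / a ^ 2 := by
    field_simp
    ring
  rw [hval] at key
  refine key.congr' ?_
  filter_upwards [Ioo_mem_nhdsLT_of_mem (Set.mem_Ioc.mpr ⟨ha, le_refl a⟩)] with r hr
  have hp : 0 < y' r := hy'pos r hr
  have hpne : y' r ≠ 0 := ne_of_gt hp
  have h2 : Real.exp (2 * y r) = Real.exp (y r) ^ 2 := by
    rw [show (2:ℝ) * y r = y r + y r by ring, Real.exp_add]; ring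
  have h3 : Real.exp (3 * y r) = Real.exp (y r) ^ 3 := by
    rw [show (3:ℝ) * y r = y r + (y r + y r) by ring, Real.exp_add, Real.exp_add]; ring
  rw [h2, h3]
  field_simp
  ring
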